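/- Let a, b be positive integers with a < b. Write b = na + r with 0 ≤ r < a. Then the pair of pairings {f: [1,a] → [a+2b+1, 2a+2b], f(x) = x + a + 2b; g: [a+1, a+b] → [a+b+1, a+2b], g(x) = x + b; h: [1, a+b] → [a+b+1, 2a+2b], h(x) = x + a + b} on the interval [1, 2a+2b] has the same orbit-partition restricted to [1, a+b] as the pair {f': [1,a] → [b+1, a+b], f'(x) = x + b; g'': [1,b] → [a+1, a+b], g''(x) = x + a} on [1, a+b], and the number of orbits of either system equals gcd(a,b). -/
import Mathlib

private def Rbig (a b : ℕ) : ℕ → ℕ → Prop := fun u v =>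
  (1 ≤ u ∧ u ≤ a ∧ v = u + a + 2 * b) ∨
  (a + 1 ≤ u ∧ u ≤ a + b ∧ v = u + b) ∨
  (1 ≤ u ∧ u ≤ a + b ∧ v = u + a + b)

private def Rsmall (a b : ℕ) : ℕ → ℕ → Prop := fun u v =>
  (1 ≤ u ∧ u ≤ a ∧ v = u + b) ∨ (1 ≤ u ∧ u ≤ b ∧ v = u + a)

private lemma mod_add_of_dvd (u c d : ℕ) (h : d ∣ c) : (u + c) % d = u % d := by
  obtain ⟨k, rfl⟩ := h
  exact Nat.add_mul_mod_self_left u d k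

private lemma mod_inv {R : ℕ → ℕ → Prop} {d : ℕ} (h : ∀ u v, R u v → u % d = v % d) :
    ∀ x y, Relation.EqvGen R x y → x % d = y % d := by
  intro x y hxy
  induction hxy with
  | rel u v huv => exact h u v huv
  | refl => rfl
  | symm _ _ _ ih => exact ih.symm
  | trans _ _ _ _ _ ih1 ih2 => exact ih1.trans ih2

private lemma small_to_big (a b : ℕ) : ∀ x y, Relation.EqvGen (Rsmall a b) x y →
    Relation.EqvGen (Rbig a b) x y := by
  intro x y h
  induction h with
  | rel u v huv =>
    rcases huv with ⟨h1, h2, rfl⟩ | ⟨h1, h2, rfl⟩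
    · have s1 : Rbig a b u (u + a + 2 * b) := Or.inl ⟨h1, h2, rfl⟩
      have s2 : Rbig a b (u + b) (u + a + 2 * b) :=
        Or.inr (Or.inr ⟨by omega, by omega, by omega⟩)
      exact Relation.EqvGen.trans _ _ _ (Relation.EqvGen.rel _ _ s1)
        (Relation.EqvGen.symm _ _ (Relation.EqvGen.rel _ _ s2))
    · have s1 : Rbig a b u (u + a + b) := Or.inr (Or.inr ⟨h1, by omega, by omega⟩)
      have s2 : Rbig a b (u + a) (u + a + b) :=
        Or.inr (Or.inl ⟨by omega, by omega, by omega⟩)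
      exact Relation.EqvGen.trans _ _ _ (Relation.EqvGen.rel _ _ s1)
        (Relation.EqvGen.symm _ _ (Relation.EqvGen.rel _ _ s2))
  | refl u => exact Relation.EqvGen.refl _
  | symm _ _ _ ih => exact Relation.EqvGen.symm _ _ ih
  | trans _ _ _ _ _ ih1 ih2 => exact Relation.EqvGen.trans _ _ _ ih1 ih2

private lemma big_to_small (a b : ℕ) : ∀ x y, Relation.EqvGen (Rbig a b) x y →
    Relation.EqvGen (Rsmall a b)
      (if x ≤ a + b then x else x - (a + b)) (if y ≤ a + b then y else y - (a + b)) := by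
  intro x y h
  induction h with
  | rel u v huv =>
    rcases huv with ⟨h1, h2, rfl⟩ | ⟨h1, h2, rfl⟩ | ⟨h1, h2, rfl⟩
    · rw [if_pos (by omega), if_neg (by omega)]
      have e : u + a + 2 * b - (a + b) = u + b := by omega
      rw [e]
      exact Relation.EqvGen.rel _ _ (Or.inl ⟨h1, h2, rfl⟩)
    · rw [if_pos h2, if_neg (by omega)]
      have e : u + b - (a + b) = u - a := by omega
      rw [e]
      exact Relation.EqvGen.symm _ _
        (Relation.EqvGen.rel _ _ (Or.inr ⟨by omega, by omega, by omega⟩))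
    · rw [if_pos h2, if_neg (by omega)]
      have e : u + a + b - (a + b) = u := by omega
      rw [e]
      exact Relation.EqvGen.refl _
  | refl u => exact Relation.EqvGen.refl _
  | symm _ _ _ ih => exact Relation.EqvGen.symm _ _ ih
  | trans _ _ _ _ _ ih1 ih2 => exact Relation.EqvGen.trans _ _ _ ih1 ih2

private lemma small_step (a b : ℕ) (ha : 0 < a) (x : ℕ) (hx1 : 1 ≤ x) (hx2 : x ≤ a + b) :
    Relation.EqvGen (Rsmall a b) x ((x - 1 + a) % (a + b) + 1) := by
  by_cases h : x ≤ b
  · have e : (x - 1 + a) % (a + b) = x - 1 + a := Nat.mod_eq_of_lt (by omega)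
    rw [e]
    have e2 : x - 1 + a + 1 = x + a := by omega
    rw [e2]
    exact Relation.EqvGen.rel _ _ (Or.inr ⟨hx1, h, rfl⟩)
  · have e : (x - 1 + a) % (a + b) = x - 1 - b := by
      have e1 : x - 1 + a = (x - 1 - b) + 1 * (a + b) := by omega
      rw [e1, Nat.add_mul_mod_self_right]
      exact Nat.mod_eq_of_lt (by omega)
    rw [e]
    have e2 : x - 1 - b + 1 = x - b := by omega
    rw [e2]
    exact Relation.EqvGen.symm _ _
      (Relation.EqvGen.rel _ _ (Or.inl ⟨by omega, by omega, by omega⟩))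

private lemma small_iter (a b : ℕ) (ha : 0 < a) (hb : 0 < b) :
    ∀ (k x : ℕ), 1 ≤ x → x ≤ a + b →
      Relation.EqvGen (Rsmall a b) x ((x - 1 + k * a) % (a + b) + 1) := by
  intro k
  induction k with
  | zero =>
    intro x hx1 hx2
    have e : (x - 1 + 0 * a) % (a + b) = x - 1 := by
      rw [Nat.zero_mul, Nat.add_zero]; exact Nat.mod_eq_of_lt (by omega)
    rw [e]
    have e2 : x - 1 + 1 = x := by omega
    rw [e2]
    exact Relation.EqvGen.refl _
  | succ k ih =>
    intro x hx1 hx2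
    set y := (x - 1 + a) % (a + b) + 1 with hy
    have hy1 : 1 ≤ y := by omega
    have hy2 : y ≤ a + b := by
      have := Nat.mod_lt (x - 1 + a) (show 0 < a + b by omega)
      omega
    have step := small_step a b ha x hx1 hx2
    have tail := ih y hy1 hy2
    have e : (y - 1 + k * a) % (a + b) = (x - 1 + (k + 1) * a) % (a + b) := by
      have : y - 1 = (x - 1 + a) % (a + b) := by omega
      rw [this, Nat.mod_add_mod]
      congr 1
      ring
    rw [e] at tail
    exact Relation.EqvGen.trans _ _ _ step tail

private lemma exists_k (a b x y : ℕ) (ha : 0 < a) (hb : 0 < b)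
    (hx1 : 1 ≤ x) (hx2 : x ≤ a + b) (hy1 : 1 ≤ y) (hy2 : y ≤ a + b)
    (hmod : x % Nat.gcd a b = y % Nat.gcd a b) :
    ∃ k : ℕ, (x - 1 + k * a) % (a + b) = y - 1 := by
  set d := Nat.gcd a b with hd
  have hdvd : (d : ℤ) ∣ (y : ℤ) - x := (Nat.modEq_iff_dvd).mp hmod
  obtain ⟨m, hm⟩ := hdvd
  have hgab : Nat.gcd a (a + b) = d := by
    rw [Nat.add_comm, Nat.gcd_add_self_right]
  have hbez : (d : ℤ) = a * Nat.gcdA a (a + b) + (a + b) * Nat.gcdB a (a + b) := by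
    rw [← hgab]
    exact_mod_cast Nat.gcd_eq_gcd_ab a (a + b)
  set u : ℤ := m * Nat.gcdA a (a + b) with hu
  set v : ℤ := m * Nat.gcdB a (a + b) with hv
  have huv : (y : ℤ) - x = u * a + v * ((a : ℤ) + b) := by
    rw [hm, hbez, hu, hv]; push_cast; ring
  have hn : (0 : ℤ) < (a : ℤ) + b := by positivity
  set k : ℤ := u % ((a : ℤ) + b) with hk
  have hk0 : 0 ≤ k := Int.emod_nonneg u (by omega)
  set K : ℕ := k.toNat with hK
  have hKk : (K : ℤ) = k := Int.toNat_of_nonneg hk0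
  have hdvd2 : ((a : ℤ) + b) ∣ ((y : ℤ) - x - K * a) := by
    have : (y : ℤ) - x - K * a = (u - k) * a + v * ((a : ℤ) + b) := by
      rw [hKk, huv]; ring
    rw [this]
    refine dvd_add (Dvd.dvd.mul_right ?_ (a : ℤ)) (dvd_mul_left _ _)
    exact Int.dvd_self_sub_of_emod_eq rfl
  refine ⟨K, ?_⟩
  have hmodeq : (x - 1 + K * a) ≡ (y - 1) [MOD a + b] := by
    rw [Nat.modEq_iff_dvd]
    have e1 : ((y - 1 : ℕ) : ℤ) = (y : ℤ) - 1 := by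
      have : (1 : ℕ) ≤ y := hy1; push_cast [this]; ring
    have e2 : ((x - 1 + K * a : ℕ) : ℤ) = (x : ℤ) - 1 + K * a := by
      have : (1 : ℕ) ≤ x := hx1; push_cast [this]; ring
    rw [e1, e2]
    have e3 : (y : ℤ) - 1 - ((x : ℤ) - 1 + K * a) = (y : ℤ) - x - K * a := by ring
    rw [e3]
    exact_mod_cast hdvd2
  have := hmodeq.symm
  calc (x - 1 + K * a) % (a + b) = (y - 1) % (a + b) := hmodeq
    _ = y - 1 := Nat.mod_eq_of_lt (by omega)

private lemma small_connect (a b : ℕ) (ha : 0 < a) (hb : 0 < b) :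
    ∀ x y, 1 ≤ x → x ≤ a + b → 1 ≤ y → y ≤ a + b →
      x % Nat.gcd a b = y % Nat.gcd a b → Relation.EqvGen (Rsmall a b) x y := by
  intro x y hx1 hx2 hy1 hy2 hmod
  obtain ⟨k, hkeq⟩ := exists_k a b x y ha hb hx1 hx2 hy1 hy2 hmod
  have := small_iter a b ha hb k x hx1 hx2
  rw [hkeq] at this
  have e : y - 1 + 1 = y := by omega
  rwa [e] at this

private lemma small_mod (a b : ℕ) :
    ∀ u v, Rsmall a b u v → u % Nat.gcd a b = v % Nat.gcd a b := by
  intro u v huv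
  rcases huv with ⟨_, _, rfl⟩ | ⟨_, _, rfl⟩
  · exact (mod_add_of_dvd u b _ (Nat.gcd_dvd_right a b)).symm
  · exact (mod_add_of_dvd u a _ (Nat.gcd_dvd_left a b)).symm

private lemma big_mod (a b : ℕ) :
    ∀ u v, Rbig a b u v → u % Nat.gcd a b = v % Nat.gcd a b := by
  intro u v huv
  rcases huv with ⟨_, _, rfl⟩ | ⟨_, _, rfl⟩ | ⟨_, _, rfl⟩
  · have e : u + a + 2 * b = u + (a + 2 * b) := by omega
    rw [e]
    exact (mod_add_of_dvd u _ _ (dvd_add (Nat.gcd_dvd_left a b)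
      ((Nat.gcd_dvd_right a b).mul_left 2))).symm
  · exact (mod_add_of_dvd u b _ (Nat.gcd_dvd_right a b)).symm
  · have e : u + a + b = u + (a + b) := by omega
    rw [e]
    exact (mod_add_of_dvd u _ _ (dvd_add (Nat.gcd_dvd_left a b)
      (Nat.gcd_dvd_right a b))).symm

private lemma big_connect (a b : ℕ) (ha : 0 < a) (hb : 0 < b) :
    ∀ x y, 1 ≤ x → x ≤ 2 * a + 2 * b → 1 ≤ y → y ≤ 2 * a + 2 * b →
      x % Nat.gcd a b = y % Nat.gcd a b → Relation.EqvGen (Rbig a b) x y := by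
  intro x y hx1 hx2 hy1 hy2 hmod
  set x' := if x ≤ a + b then x else x - (a + b) with hx'
  set y' := if y ≤ a + b then y else y - (a + b) with hy'
  have hxx' : Relation.EqvGen (Rbig a b) x' x := by
    by_cases h : x ≤ a + b
    · rw [hx', if_pos h]; exact Relation.EqvGen.refl _
    · rw [hx', if_neg h]
      exact Relation.EqvGen.rel _ _
        (Or.inr (Or.inr ⟨by omega, by omega, by omega⟩))
  have hyy' : Relation.EqvGen (Rbig a b) y' y := by
    by_cases h : y ≤ a + b
    · rw [hy', if_pos h]; exact Relation.EqvGen.refl _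
    · rw [hy', if_neg h]
      exact Relation.EqvGen.rel _ _
        (Or.inr (Or.inr ⟨by omega, by omega, by omega⟩))
  have hx'1 : 1 ≤ x' := by rw [hx']; split <;> omega
  have hx'2 : x' ≤ a + b := by rw [hx']; split <;> omega
  have hy'1 : 1 ≤ y' := by rw [hy']; split <;> omega
  have hy'2 : y' ≤ a + b := by rw [hy']; split <;> omega
  have hxm : x' % Nat.gcd a b = x % Nat.gcd a b := mod_inv (big_mod a b) _ _ hxx'
  have hym : y' % Nat.gcd a b = y % Nat.gcd a b := mod_inv (big_mod a b) _ _ hyy'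
  have hsmall : Relation.EqvGen (Rsmall a b) x' y' :=
    small_connect a b ha hb x' y' hx'1 hx'2 hy'1 hy'2 (by omega)
  exact Relation.EqvGen.trans _ _ _ (Relation.EqvGen.symm _ _ hxx')
    (Relation.EqvGen.trans _ _ _ (small_to_big a b x' y' hsmall) hyy')

private lemma card_orbits (N d : ℕ) (hd : 0 < d) (hdN : d ≤ N) (R : ℕ → ℕ → Prop)
    (h1 : ∀ x y, Relation.EqvGen R x y → x % d = y % d)
    (h2 : ∀ x y, 1 ≤ x → x ≤ N → 1 ≤ y → y ≤ N → x % d = y % d → Relation.EqvGen R x y) :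
    Nat.card (Quotient (Setoid.comap (Subtype.val : {x : ℕ // 1 ≤ x ∧ x ≤ N} → ℕ)
      ⟨Relation.EqvGen R, Relation.EqvGen.is_equivalence _⟩)) = d := by
  set S := Setoid.comap (Subtype.val : {x : ℕ // 1 ≤ x ∧ x ≤ N} → ℕ)
      ⟨Relation.EqvGen R, Relation.EqvGen.is_equivalence _⟩ with hS
  let f : Quotient S → Fin d := Quotient.lift
    (fun x : {x : ℕ // 1 ≤ x ∧ x ≤ N} => (⟨x.1 % d, Nat.mod_lt _ hd⟩ : Fin d))
    (fun p q h => Fin.ext (h1 _ _ h))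
  have hbij : Function.Bijective f := by
    constructor
    · intro p q
      induction p using Quotient.ind with | _ p =>
      induction q using Quotient.ind with | _ q =>
      intro h
      apply Quotient.sound
      have h' : p.1 % d = q.1 % d := congrArg Fin.val h
      exact h2 _ _ p.2.1 p.2.2 q.2.1 q.2.2 h'
    · intro r
      refine ⟨Quotient.mk S ⟨if r.1 = 0 then d else r.1, ?_, ?_⟩, ?_⟩
      · split <;> omega
      · have := r.2; split <;> omega
      · apply Fin.ext
        show (if r.1 = 0 then d else r.1) % d = r.1
        split
        · rename_i h
          rw [h, Nat.mod_self]
        · exact Nat.mod_eq_of_lt r.2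
  rw [Nat.card_congr (Equiv.ofBijective f hbij), Nat.card_eq_fintype_card, Fintype.card_fin]

theorem stmt_13 (a b : ℕ) (ha : 0 < a) (hab : a < b) :
    (∀ x y : ℕ, 1 ≤ x → x ≤ a + b → 1 ≤ y → y ≤ a + b →
      (Relation.EqvGen (fun u v : ℕ =>
          (1 ≤ u ∧ u ≤ a ∧ v = u + a + 2 * b) ∨
          (a + 1 ≤ u ∧ u ≤ a + b ∧ v = u + b) ∨
          (1 ≤ u ∧ u ≤ a + b ∧ v = u + a + b)) x y ↔
       Relation.EqvGen (fun u v : ℕ =>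
          (1 ≤ u ∧ u ≤ a ∧ v = u + b) ∨ (1 ≤ u ∧ u ≤ b ∧ v = u + a)) x y)) ∧
    Nat.card (Quotient (Setoid.comap
      (Subtype.val : {x : ℕ // 1 ≤ x ∧ x ≤ a + b} → ℕ)
      ⟨Relation.EqvGen (fun u v : ℕ =>
          (1 ≤ u ∧ u ≤ a ∧ v = u + b) ∨ (1 ≤ u ∧ u ≤ b ∧ v = u + a)),
        Relation.EqvGen.is_equivalence _⟩)) = Nat.gcd a b ∧
    Nat.card (Quotient (Setoid.comap
      (Subtype.val : {x : ℕ // 1 ≤ x ∧ x ≤ 2 * a + 2 * b} → ℕ)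
      ⟨Relation.EqvGen (fun u v : ℕ =>
          (1 ≤ u ∧ u ≤ a ∧ v = u + a + 2 * b) ∨
          (a + 1 ≤ u ∧ u ≤ a + b ∧ v = u + b) ∨
          (1 ≤ u ∧ u ≤ a + b ∧ v = u + a + b)),
        Relation.EqvGen.is_equivalence _⟩)) = Nat.gcd a b := by
  have hb : 0 < b := lt_trans ha hab
  have hd : 0 < Nat.gcd a b := Nat.gcd_pos_of_pos_left b ha
  have hda : Nat.gcd a b ≤ a := Nat.le_of_dvd ha (Nat.gcd_dvd_left a b)
  refine ⟨?_, ?_, ?_⟩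
  · intro x y hx1 hx2 hy1 hy2
    constructor
    · intro h
      have := big_to_small a b x y h
      rwa [if_pos hx2, if_pos hy2] at this
    · intro h
      exact small_to_big a b x y h
  · exact card_orbits (a + b) (Nat.gcd a b) hd (by omega) _
      (mod_inv (small_mod a b)) (small_connect a b ha hb)
  · exact card_orbits (2 * a + 2 * b) (Nat.gcd a b) hd (by omega) _
      (mod_inv (big_mod a b)) (big_connect a b ha hb)
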